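/- Let $G$ be a row-finite directed graph with no sinks satisfying Condition (L) (every loop has an exit). Then there exists a vector $n \in \prod_{G^0}\mathbb{Z}$ such that (1) every entry of $(A_G - I)n$ is a nonnegative integer, and (2) for every vertex $v \in G^0$ there exists a vertex $w$ reachable from $v$ by a path with $((A_G - I)n)(w) \geq 1$. -/

import Mathlib

open scoped BigOperators

/-- `l` is a path: consecutive edges are composable. -/
def IsPathList {V E : Type*} (r s : E → V) (l : List E) : Prop :=
  l.Chain' (fun a b => r a = s b)

/-- `l` is a loop: a nonempty path whose source equals its range. -/
def IsLoopList {V E : Type*} (r s : E → V) (l : List E) : Prop :=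
  IsPathList r s l ∧ ∃ h : l ≠ [], s (l.head h) = r (l.getLast h)

/-- The loop `l` has an exit: an edge `e` with the same source as some edge of
`l` but distinct from it. -/
def HasExit {V E : Type*} (s : E → V) (l : List E) : Prop :=
  ∃ e : E, ∃ f ∈ l, s e = s f ∧ e ≠ f

/-- Condition (L): every loop has an exit. -/
def CondL {V E : Type*} (r s : E → V) : Prop :=
  ∀ l : List E, l ≠ [] → IsLoopList r s l → HasExit s l

/-- `v ≥ w`: there is a (possibly empty) path from `v` to `w`. -/
def Reach {V E : Type*} (r s : E → V) : V → V → Prop :=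
  Relation.ReflTransGen (fun a b => ∃ e, s e = a ∧ r e = b)

/-- Left multiplication by the vertex matrix `A_G` on `∏_{G⁰} ℤ`:
`(A y)(v) = ∑_{s(e)=v} y(r e)`. -/
noncomputable def Aact {V E : Type*} (r s : E → V) (y : V → ℤ) (v : V) : ℤ :=
  ∑ᶠ e ∈ {e : E | s e = v}, y (r e)



section Height
variable {α : Type*}

/-- Orbit equivalence for a function. -/
def NxtRel (f : α → α) (x y : α) : Prop := ∃ k m : ℕ, f^[k] x = f^[m] y

theorem nxtRel_equivalence (f : α → α) : Equivalence (NxtRel f) := by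
  constructor
  · intro x; exact ⟨0, 0, rfl⟩
  · rintro x y ⟨k, m, h⟩; exact ⟨m, k, h.symm⟩
  · rintro x y z ⟨k, m, h⟩ ⟨k', m', h'⟩
    refine ⟨k' + k, m + m', ?_⟩
    rw [Function.iterate_add_apply, h, ← Function.iterate_add_apply, Nat.add_comm k' m,
      Function.iterate_add_apply, h', ← Function.iterate_add_apply]

/-- The setoid of orbit equivalence. -/
def nxtSetoid (f : α → α) : Setoid α := ⟨NxtRel f, nxtRel_equivalence f⟩

/-- A chosen base point in each orbit class. -/
noncomputable def nxtBase (f : α → α) (x : α) : α :=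
  @Quotient.out α (nxtSetoid f) (@Quotient.mk α (nxtSetoid f) x)

theorem nxtRel_base (f : α → α) (x : α) :
    ∃ k m : ℕ, f^[k] x = f^[m] (nxtBase f x) :=
  (nxtRel_equivalence f).symm (@Quotient.mk_out α (nxtSetoid f) x)

theorem nxtBase_eq (f : α → α) {x y : α} (h : NxtRel f x y) :
    nxtBase f x = nxtBase f y := by
  unfold nxtBase
  congr 1
  exact @Quotient.sound α (nxtSetoid f) x y h

/-- Injectivity along an orbit of a cycle-free function. -/
theorem iterate_inj (f : α → α) (hnc : ∀ (x : α) (k : ℕ), f^[k + 1] x ≠ x)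
    {c : α} {a b : ℕ} (h : f^[a] c = f^[b] c) : a = b := by
  have key : ∀ a d : ℕ, f^[a] c = f^[a + d] c → d = 0 := by
    intro a d h
    by_contra hd
    obtain ⟨e, rfl⟩ := Nat.exists_eq_succ_of_ne_zero hd
    apply hnc (f^[a] c) e
    calc f^[e + 1] (f^[a] c) = f^[e + 1 + a] c := (Function.iterate_add_apply f (e+1) a c).symm
      _ = f^[a + (e + 1)] c := by rw [Nat.add_comm]
      _ = f^[a] c := h.symm
  rcases Nat.le_total a b with hab | hab
  · obtain ⟨d, rfl⟩ := Nat.exists_eq_add_of_le hab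
    have := key a d h; omega
  · obtain ⟨d, rfl⟩ := Nat.exists_eq_add_of_le hab
    have := key b d h.symm; omega

/-- The height of a point: `m - k` where `f^[k] x = f^[m] (base x)`. -/
noncomputable def nxtHeight (f : α → α) (x : α) : ℤ :=
  Int.ofNat (Classical.choose (Classical.choose_spec (nxtRel_base f x))) -
    Int.ofNat (Classical.choose (nxtRel_base f x))

theorem iterate_diff_eq (f : α → α) (hnc : ∀ (x : α) (k : ℕ), f^[k + 1] x ≠ x)
    {x c : α} {k m k' m' : ℕ} (h : f^[k] x = f^[m] c) (h' : f^[k'] x = f^[m'] c) :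
    (m : ℤ) - (k : ℤ) = (m' : ℤ) - (k' : ℤ) := by
  have key : f^[k' + m] c = f^[k + m'] c := by
    calc f^[k' + m] c = f^[k'] (f^[m] c) := Function.iterate_add_apply f k' m c
      _ = f^[k'] (f^[k] x) := by rw [h]
      _ = f^[k' + k] x := (Function.iterate_add_apply f k' k x).symm
      _ = f^[k + k'] x := by rw [Nat.add_comm]
      _ = f^[k] (f^[k'] x) := Function.iterate_add_apply f k k' x
      _ = f^[k] (f^[m'] c) := by rw [h']
      _ = f^[k + m'] c := (Function.iterate_add_apply f k m' c).symm
  have := iterate_inj f hnc key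
  omega

theorem nxtHeight_spec (f : α → α) (hnc : ∀ (x : α) (k : ℕ), f^[k + 1] x ≠ x)
    (x : α) {k m : ℕ} (h : f^[k] x = f^[m] (nxtBase f x)) :
    nxtHeight f x = (m : ℤ) - (k : ℤ) := by
  have h1 := Classical.choose_spec (Classical.choose_spec (nxtRel_base f x))
  have h2 := iterate_diff_eq f hnc h1 h
  unfold nxtHeight
  simp only [Int.ofNat_eq_coe]
  omega

theorem nxtHeight_apply (f : α → α) (hnc : ∀ (x : α) (k : ℕ), f^[k + 1] x ≠ x) (x : α) :
    nxtHeight f (f x) = nxtHeight f x + 1 := by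
  obtain ⟨k, m, h⟩ := nxtRel_base f x
  have hb : nxtBase f (f x) = nxtBase f x := nxtBase_eq f ⟨0, 1, rfl⟩
  have h2 : f^[k] (f x) = f^[m + 1] (nxtBase f (f x)) := by
    rw [hb]
    calc f^[k] (f x) = f^[k + 1] x := (Function.iterate_succ_apply f k x).symm
      _ = f (f^[k] x) := Function.iterate_succ_apply' f k x
      _ = f (f^[m] (nxtBase f x)) := by rw [h]
      _ = f^[m + 1] (nxtBase f x) := (Function.iterate_succ_apply' f m _).symm
  rw [nxtHeight_spec f hnc (f x) h2, nxtHeight_spec f hnc x h]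
  push_cast
  ring

theorem nxtHeight_iterate (f : α → α) (hnc : ∀ (x : α) (k : ℕ), f^[k + 1] x ≠ x)
    (x : α) (k : ℕ) : nxtHeight f (f^[k] x) = nxtHeight f x + k := by
  induction k with
  | zero => simp
  | succ n ih =>
    rw [Function.iterate_succ_apply', nxtHeight_apply f hnc, ih]
    push_cast; ring

end Height

/-- for a countable row-finite graph with no sinks satisfying
Condition (L), there is a vector `n ∈ ∏_{G⁰}ℤ` with `(A_G - I)n ≥ 0`
entrywise, and such that every vertex reaches a vertex `w` with
`((A_G - I)n)(w) ≥ 1`. -/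
theorem exists_vector_nonneg_and_reach_pos
    {V E : Type*} [Countable V] [Countable E] (r s : E → V)
    (hrow : ∀ v : V, {e : E | s e = v}.Finite)
    (hnosink : ∀ v : V, ∃ e : E, s e = v)
    (hL : CondL r s) :
    ∃ n : V → ℤ,
      (∀ v : V, 0 ≤ Aact r s n v - n v) ∧
      (∀ v : V, ∃ w : V, Reach r s v w ∧ 1 ≤ Aact r s n w - n w) := by
  classical
  -- W : vertices with at least two outgoing edges; T : vertices that cannot reach W
  set W : Set V := {w | ∃ e₁ e₂ : E, s e₁ = w ∧ s e₂ = w ∧ e₁ ≠ e₂} with hWdef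
  set T : Set V := {v | ∀ w, Reach r s v w → w ∉ W} with hTdef
  set nE : V → E := fun v => Classical.choose (hnosink v) with hnEdef
  have hsE : ∀ v : V, s (nE v) = v := fun v => Classical.choose_spec (hnosink v)
  set nx : V → V := fun v => r (nE v) with hnxdef
  have hTW : ∀ v ∈ T, v ∉ W := fun v hv => hv v Relation.ReflTransGen.refl
  have hTuniq : ∀ v ∈ T, ∀ e : E, s e = v → e = nE v := by
    intro v hv e he
    by_contra hne'
    exact hTW v hv ⟨e, nE v, he, hsE v, hne'⟩
  have hreach_nx : ∀ v : V, Reach r s v (nx v) :=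
    fun v => Relation.ReflTransGen.single ⟨nE v, hsE v, rfl⟩
  have hreach_iter : ∀ (k : ℕ) (v : V), Reach r s v (nx^[k] v) := by
    intro k v
    induction k with
    | zero => exact Relation.ReflTransGen.refl
    | succ m ih =>
      rw [Function.iterate_succ_apply']
      exact ih.tail ⟨nE (nx^[m] v), hsE _, rfl⟩
  have hTnx : ∀ v ∈ T, nx v ∈ T := by
    intro v hv w hw
    exact hv w ((hreach_nx v).trans hw)
  set f : T → T := fun x => ⟨nx x, hTnx x x.2⟩ with hfdef
  have hval : ∀ (x : T) (k : ℕ), ((f^[k] x : T) : V) = nx^[k] (x : V) := by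
    intro x k
    induction k with
    | zero => rfl
    | succ m ih =>
      rw [Function.iterate_succ_apply', Function.iterate_succ_apply', ← ih]
  -- no cycles in T
  have hnc : ∀ (x : T) (k : ℕ), f^[k + 1] x ≠ x := by
    intro x k hcyc
    set g : ℕ → E := fun i => nE (nx^[i] (x : V)) with hgdef
    set l : List E := (List.range (k + 1)).map g with hldef
    have hlne : l ≠ [] := by simp [hldef]
    have hmemT : ∀ i : ℕ, nx^[i] (x : V) ∈ T := by
      intro i
      rw [← hval x i]
      exact (f^[i] x).2
    have hpath : IsPathList r s l := by
      rw [hldef, IsPathList, List.Chain', List.isChain_map]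
      rw [List.isChain_range_succ]
      intro i hi
      show r (g i) = s (g (i + 1))
      rw [hgdef]
      simp only
      rw [hsE, Function.iterate_succ_apply']
    have hloop : IsLoopList r s l := by
      refine ⟨hpath, hlne, ?_⟩
      have hhead : l.head hlne = g 0 := by
        have h1 := List.head_map (f := g) (l := List.range (k + 1)) hlne
        rw [List.head_range] at h1
        exact h1
      have hlast : l.getLast hlne = g k := by
        have h2 := List.getLast_map (f := g) (l := List.range (k + 1)) hlne
        rw [List.getLast_range] at h2
        exact h2
      rw [hhead, hlast, hgdef]
      simp only
      rw [hsE, Function.iterate_zero_apply]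
      show (x : V) = nx (nx^[k] (x : V))
      rw [← Function.iterate_succ_apply' nx k, ← hval x (k + 1), hcyc]
    obtain ⟨e, e', he'l, hse, hnee⟩ := hL l hlne hloop
    obtain ⟨i, _, rfl⟩ := List.mem_map.mp he'l
    have hsrc : s (g i) = nx^[i] (x : V) := hsE _
    exact hTW _ (hmemT i) ⟨e, g i, by rw [hse, hsrc], hsrc, hnee⟩
  set H : T → ℤ := nxtHeight f with hHdef
  have hHapp : ∀ x : T, H (f x) = H x + 1 := fun x => nxtHeight_apply f hnc x
  have hHiter : ∀ (x : T) (k : ℕ), H (f^[k] x) = H x + k := fun x k => nxtHeight_iterate f hnc x k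
  set n : V → ℤ := fun v => if hv : v ∈ T then max 1 (H ⟨v, hv⟩) else 1 with hndef
  have hn1 : ∀ v : V, 1 ≤ n v := by
    intro v
    simp only [hndef]
    by_cases hv : v ∈ T
    · rw [dif_pos hv]; exact le_max_left _ _
    · rw [dif_neg hv]
  have hnT : ∀ (v : V) (hv : v ∈ T), n v = max 1 (H ⟨v, hv⟩) := by
    intro v hv; simp only [hndef]; exact dif_pos hv
  -- Aact as a finite sum
  have hAa : ∀ v : V, Aact r s n v = ∑ e ∈ (hrow v).toFinset, n (r e) := by
    intro v
    have hco : {e : E | s e = v} = ((hrow v).toFinset : Set E) :=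
      ((hrow v).coe_toFinset).symm
    rw [Aact]
    conv_lhs => rw [hco]
    rw [finsum_mem_coe_finset]
  have hmemFin : ∀ (v : V) (e : E), e ∈ (hrow v).toFinset ↔ s e = v := by
    intro v e; rw [Set.Finite.mem_toFinset]; rfl
  have hsumcard : ∀ v : V, ((hrow v).toFinset.card : ℤ) ≤ Aact r s n v := by
    intro v
    rw [hAa]
    calc ((hrow v).toFinset.card : ℤ) = ∑ _e ∈ (hrow v).toFinset, (1 : ℤ) := by simp
      _ ≤ ∑ e ∈ (hrow v).toFinset, n (r e) := Finset.sum_le_sum (fun e _ => hn1 (r e))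
  have hTfin : ∀ v ∈ T, (hrow v).toFinset = {nE v} := by
    intro v hv
    ext e
    rw [hmemFin, Finset.mem_singleton]
    exact ⟨fun he => hTuniq v hv e he, fun he => he ▸ hsE v⟩
  have hAaT : ∀ v ∈ T, Aact r s n v = n (nx v) := by
    intro v hv
    rw [hAa, hTfin v hv, Finset.sum_singleton]
  have hnnx : ∀ (v : V) (hv : v ∈ T), n (nx v) = max 1 (H ⟨v, hv⟩ + 1) := by
    intro v hv
    rw [hnT (nx v) (hTnx v hv)]
    have hx : (⟨nx v, hTnx v hv⟩ : T) = f ⟨v, hv⟩ := rfl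
    rw [hx, hHapp]
  -- W vertices give strict inequality
  have hWstrict : ∀ w ∈ W, 1 ≤ Aact r s n w - n w := by
    intro w hw
    obtain ⟨e₁, e₂, h1, h2, hne12⟩ := hw
    have hwT : w ∉ T := fun hwT => hTW w hwT ⟨e₁, e₂, h1, h2, hne12⟩
    have hnw : n w = 1 := by simp only [hndef]; exact dif_neg hwT
    have hcard : 2 ≤ (hrow w).toFinset.card := by
      apply Finset.one_lt_card.mpr
      exact ⟨e₁, (hmemFin w e₁).mpr h1, e₂, (hmemFin w e₂).mpr h2, hne12⟩
    have := hsumcard w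
    rw [hnw]
    have : (2 : ℤ) ≤ Aact r s n w := le_trans (by exact_mod_cast hcard) (hsumcard w)
    omega
  refine ⟨n, ?_, ?_⟩
  · -- nonnegativity
    intro v
    by_cases hv : v ∈ T
    · rw [hAaT v hv, hnnx v hv, hnT v hv]
      have : max 1 (H ⟨v, hv⟩) ≤ max 1 (H ⟨v, hv⟩ + 1) :=
        max_le_max le_rfl (by omega)
      omega
    · have hnv : n v = 1 := by simp only [hndef]; exact dif_neg hv
      have hcard : 1 ≤ (hrow v).toFinset.card := by
        apply Finset.card_pos.mpr
        exact ⟨nE v, (hmemFin v (nE v)).mpr (hsE v)⟩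
      have h1 : (1 : ℤ) ≤ Aact r s n v := le_trans (by exact_mod_cast hcard) (hsumcard v)
      omega
  · -- reach a strict vertex
    intro v
    by_cases hv : v ∈ T
    · set x : T := ⟨v, hv⟩ with hxdef
      set k : ℕ := (1 - H x).toNat with hkdef
      refine ⟨nx^[k] v, hreach_iter k v, ?_⟩
      have hwT : nx^[k] v ∈ T := by rw [← hval x k]; exact (f^[k] x).2
      have hxk : (⟨nx^[k] v, hwT⟩ : T) = f^[k] x := Subtype.ext (hval x k).symm
      have hH1 : 1 ≤ H ⟨nx^[k] v, hwT⟩ := by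
        rw [hxk, hHiter]
        have : (1 - H x) ≤ ((1 - H x).toNat : ℤ) := Int.self_le_toNat _
        omega
      rw [hAaT _ hwT, hnnx _ hwT, hnT _ hwT]
      rw [max_eq_right (by omega), max_eq_right (by omega)]
      omega
    · rw [hTdef] at hv
      simp only [Set.mem_setOf_eq] at hv
      push_neg at hv
      obtain ⟨w, hwr, hwW⟩ := hv
      exact ⟨w, hwr, hWstrict w hwW⟩
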